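/- Let Z be a multimatroid with total order ≺ on its skew classes, T a transversal, and ω, ω' skew classes. If C₁ and C₂ are circuits of Z with min(Cᵢ) ∈ ω and Cᵢ − ω ⊆ T for i = 1, 2, then min(C₁) = min(C₂). -/

import Mathlib

open Finset

variable {U ι : Type}

section Defs
variable [DecidableEq U] [Fintype U] [DecidableEq ι] [Fintype ι]

/-- `S` is a subtransversal: it meets each skew class at most once.
Skew classes are the fibers of `cls : U → ι`. -/
def Subtransversal (cls : U → ι) (S : Finset U) : Prop :=
  Set.InjOn cls ↑S

/-- The skew class with index `i`, as a finset. -/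
def skewClass (cls : U → ι) (i : ι) : Finset U :=
  Finset.univ.filter (fun x => cls x = i)

/-- `T` is a transversal: it meets each skew class exactly once. -/
def Transversal (cls : U → ι) (T : Finset U) : Prop :=
  Subtransversal cls T ∧ ∀ i : ι, ∃ x ∈ T, cls x = i

/-- The multimatroid rank axioms for a rank function `r` on the carrier given by
`cls : U → ι` (whose fibers, assumed nonempty, are the skew classes).
The first three fields express axiom (R1) (each transversal carries a matroid),
and `axiomR2` is axiom (R2). -/
structure IsMultimatroid (cls : U → ι) (r : Finset U → ℕ) : Prop where
  cls_surj : Function.Surjective cls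
  rank_le_card : ∀ S, Subtransversal cls S → r S ≤ S.card
  mono : ∀ S T, Subtransversal cls T → S ⊆ T → r S ≤ r T
  submod : ∀ S T, Subtransversal cls (S ∪ T) → r (S ∪ T) + r (S ∩ T) ≤ r S + r T
  axiomR2 : ∀ S, ∀ x y : U, Subtransversal cls S → cls x = cls y → x ≠ y →
    (∀ u ∈ S, cls u ≠ cls x) →
    2 * r S + 1 ≤ r (insert x S) + r (insert y S)

/-- An independent set of the multimatroid. -/
def Indep (cls : U → ι) (r : Finset U → ℕ) (S : Finset U) : Prop :=
  Subtransversal cls S ∧ r S = S.card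

/-- A basis: a maximal independent subtransversal. -/
def MMBasis (cls : U → ι) (r : Finset U → ℕ) (B : Finset U) : Prop :=
  Indep cls r B ∧ ∀ S, Indep cls r S → B ⊆ S → S = B

/-- A circuit: a minimal dependent subtransversal. -/
def Circuit (cls : U → ι) (r : Finset U → ℕ) (C : Finset U) : Prop :=
  Subtransversal cls C ∧ r C < C.card ∧ ∀ D ⊂ C, ¬ r D < D.card

/-- Non-degenerate: every skew class has at least two elements. -/
def Nondegenerate (cls : U → ι) : Prop :=
  ∀ i : ι, 2 ≤ (skewClass cls i).card

/-- An element is singular if its singleton has rank `0`. -/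
def Singular (r : Finset U → ℕ) (e : U) : Prop := r {e} = 0

end Defs

section Order
variable [DecidableEq U] [Fintype U] [DecidableEq ι] [Fintype ι] [LinearOrder ι]

/-- The skew class `i` is active with respect to the transversal `T` (in
particular, with respect to a basis): there is a circuit `C` with
`C − ω_i ⊆ T` whose `≺`-least element lies in the class `i`. -/
def Active (cls : U → ι) (r : Finset U → ℕ) (T : Finset U) (i : ι) : Prop :=
  ∃ C, Circuit cls r C ∧ C \ skewClass cls i ⊆ T ∧
    ∃ m ∈ C, cls m = i ∧ ∀ x ∈ C, i ≤ cls x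

end Order

/-- if `C₁`, `C₂` are circuits whose least elements `m₁`, `m₂` lie in
the skew class `i` and `Cⱼ − ω_i ⊆ T` for a transversal `T`, then `m₁ = m₂`. -/
theorem stmt_16 [DecidableEq U] [Fintype U] [DecidableEq ι] [Fintype ι] [LinearOrder ι]
    (cls : U → ι) (r : Finset U → ℕ) (hM : IsMultimatroid cls r)
    (T : Finset U) (hT : Transversal cls T) (i : ι)
    (C₁ C₂ : Finset U) (h1 : Circuit cls r C₁) (h2 : Circuit cls r C₂)
    (m₁ : U) (hm₁ : m₁ ∈ C₁) (hm₁i : cls m₁ = i) (hmin₁ : ∀ x ∈ C₁, i ≤ cls x)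
    (hsub₁ : C₁ \ skewClass cls i ⊆ T)
    (m₂ : U) (hm₂ : m₂ ∈ C₂) (hm₂i : cls m₂ = i) (hmin₂ : ∀ x ∈ C₂, i ≤ cls x)
    (hsub₂ : C₂ \ skewClass cls i ⊆ T) :
    m₁ = m₂ := by
  by_contra hne
  have honly₁ : ∀ x ∈ C₁, cls x = i → x = m₁ := fun x hx hxi =>
    h1.1 (by simpa using hx) (by simpa using hm₁) (by rw [hxi, hm₁i])
  have honly₂ : ∀ x ∈ C₂, cls x = i → x = m₂ := fun x hx hxi =>
    h2.1 (by simpa using hx) (by simpa using hm₂) (by rw [hxi, hm₂i])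
  set A : Finset U := (C₁ \ {m₁}) ∪ (C₂ \ {m₂}) with hA
  have hAi : ∀ u ∈ A, cls u ≠ i := by
    intro u hu hui
    rcases Finset.mem_union.1 hu with h | h
    · rcases Finset.mem_sdiff.1 h with ⟨hc, hm⟩
      exact (Finset.notMem_singleton.1 hm) (honly₁ u hc hui)
    · rcases Finset.mem_sdiff.1 h with ⟨hc, hm⟩
      exact (Finset.notMem_singleton.1 hm) (honly₂ u hc hui)
  have hAT : A ⊆ T := by
    intro x hx
    rcases Finset.mem_union.1 hx with h | h
    · rcases Finset.mem_sdiff.1 h with ⟨hc, _⟩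
      exact hsub₁ (Finset.mem_sdiff.2 ⟨hc, by simpa [skewClass] using hAi x hx⟩)
    · rcases Finset.mem_sdiff.1 h with ⟨hc, _⟩
      exact hsub₂ (Finset.mem_sdiff.2 ⟨hc, by simpa [skewClass] using hAi x hx⟩)
  have hAsub : Subtransversal cls A :=
    Set.InjOn.mono (by exact_mod_cast hAT) hT.1
  have hm₁A : m₁ ∉ A := fun h => hAi m₁ h hm₁i
  have hm₂A : m₂ ∉ A := fun h => hAi m₂ h hm₂i
  -- subtransversality of A ∪ {mⱼ}
  have hins : ∀ m : U, cls m = i → Subtransversal cls (A ∪ {m}) := by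
    intro m hmi x hx y hy hxy
    simp only [Finset.coe_union, Finset.coe_singleton, Set.mem_union,
      Set.mem_singleton_iff, Finset.mem_coe] at hx hy
    rcases hx with hx | hx <;> rcases hy with hy | hy
    · exact hAsub hx hy hxy
    · exact absurd (hxy.trans (hy ▸ hmi)) (hAi x hx)
    · exact absurd ((hxy.symm).trans (hx ▸ hmi)) (hAi y hy)
    · rw [hx, hy]
  -- circuit rank facts
  have rank_eq : ∀ (C : Finset U) (m : U), Circuit cls r C → m ∈ C →
      r C = r (C \ {m}) := by
    intro C m hC hm
    have hsub : C \ {m} ⊂ C := Finset.sdiff_ssubset (by simpa using hm) (by simp)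
    have h1' := hC.2.2 _ hsub
    have hst : Subtransversal cls (C \ {m}) :=
      Set.InjOn.mono (by exact_mod_cast Finset.sdiff_subset) hC.1
    have hle := hM.rank_le_card _ hst
    have heq : r (C \ {m}) = (C \ {m}).card := le_antisymm hle (not_lt.1 h1')
    have hcard : (C \ {m}).card + 1 = C.card := by
      have hc1 : 1 ≤ C.card := Finset.card_pos.2 ⟨m, hm⟩
      rw [Finset.card_sdiff_of_subset (by simpa using hm)]
      simp only [Finset.card_singleton]
      omega
    have hub : r C ≤ (C \ {m}).card := by
      have := hC.2.1; omega
    have hlb : r (C \ {m}) ≤ r C := hM.mono _ _ hC.1 Finset.sdiff_subset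
    omega
  -- r (A ∪ {mⱼ}) ≤ r A via submodularity
  have step : ∀ (C : Finset U) (m : U), Circuit cls r C → m ∈ C →
      cls m = i → (∀ x ∈ C, cls x = i → x = m) → (C \ {m}) ⊆ A →
      r (insert m A) ≤ r A := by
    intro C m hC hm hmi honly hCA
    have hmA : m ∉ A := fun h => hAi m h hmi
    have hCins : C ⊆ insert m A := by
      intro x hx
      by_cases hxm : x = m
      · simp [hxm]
      · exact Finset.mem_insert_of_mem (hCA (Finset.mem_sdiff.2 ⟨hx, by simp [hxm]⟩))
    have hUnion : A ∪ C = insert m A := by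
      apply Finset.Subset.antisymm
      · exact Finset.union_subset (Finset.subset_insert _ _) hCins
      · intro x hx
        rcases Finset.mem_insert.1 hx with h | h
        · exact Finset.mem_union_right _ (h ▸ hm)
        · exact Finset.mem_union_left _ h
    have hInter : A ∩ C = C \ {m} := by
      apply Finset.Subset.antisymm
      · intro x hx
        rcases Finset.mem_inter.1 hx with ⟨hxA, hxC⟩
        exact Finset.mem_sdiff.2 ⟨hxC, by simp; rintro rfl; exact hmA hxA⟩
      · intro x hx
        rcases Finset.mem_sdiff.1 hx with ⟨hxC, hxm⟩
        exact Finset.mem_inter.2 ⟨hCA hx, hxC⟩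
    have hst : Subtransversal cls (A ∪ C) := by
      rw [hUnion, Finset.insert_eq, Finset.union_comm]
      exact hins m hmi
    have hsm := hM.submod A C hst
    rw [hUnion, hInter, ← rank_eq C m hC hm] at hsm
    omega
  have hCA₁ : C₁ \ {m₁} ⊆ A := Finset.subset_union_left
  have hCA₂ : C₂ \ {m₂} ⊆ A := Finset.subset_union_right
  have s1 := step C₁ m₁ h1 hm₁ hm₁i honly₁ hCA₁
  have s2 := step C₂ m₂ h2 hm₂ hm₂i honly₂ hCA₂
  have hR2 := hM.axiomR2 A m₁ m₂ hAsub (hm₁i.trans hm₂i.symm) hne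
    (fun u hu => by rw [hm₁i]; exact hAi u hu)
  omega
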